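/- arXiv:1606.03520 — 2 statements merged into one kernel-verified Lean document; each statement's English description precedes it below -/
import Mathlib

section
/- Let T be a bounded holomorphic function on the right half-plane that factors as T = T_mp · T_ap where T_ap(s) = ((s - q)/(s + q))·e^{-τ s} with q > 0, τ ≥ 0, and T_mp bounded holomorphic on the right half-plane. If T(p) = 1 for some real p > 0 with p ≠ q, then ‖T‖_∞ ≥ ((p + q)/|p - q|)·e^{τ p}. -/
open Filter

open Complex in
/-- Auxiliary: all-pass lower bound on the line `Re z = δ`, `0 < δ < q`. -/
lemma allpass_lower (q δ : ℝ) (hq : 0 < q) (hδ : 0 < δ) (hδq : δ < q) (z : ℂ)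
    (hz : z.re = δ) :
    (q - δ) / (q + δ) ≤ ‖(z - ↑q) / (z + ↑q)‖ := by
  have hzq : z + ↑q ≠ 0 := by
    intro h
    have : (z + ↑q).re = 0 := by rw [h]; simp
    simp [hz] at this; linarith
  have hnpos : 0 < ‖z + (↑q : ℂ)‖ := norm_pos_iff.mpr hzq
  rw [norm_div, div_le_div_iff₀ (by linarith) hnpos]
  have h1 : ‖z - (↑q : ℂ)‖ ^ 2 = (δ - q) ^ 2 + z.im ^ 2 := by
    rw [Complex.sq_norm, Complex.normSq_apply]
    simp [hz]; ring
  have h2 : ‖z + (↑q : ℂ)‖ ^ 2 = (δ + q) ^ 2 + z.im ^ 2 := by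
    rw [Complex.sq_norm, Complex.normSq_apply]
    simp [hz]; ring
  have hsq : ((q - δ) * ‖z + (↑q : ℂ)‖) ^ 2 ≤ (‖z - (↑q : ℂ)‖ * (q + δ)) ^ 2 := by
    have e1 : ((q - δ) * ‖z + (↑q : ℂ)‖) ^ 2 = (q - δ) ^ 2 * ((δ + q) ^ 2 + z.im ^ 2) := by
      rw [mul_pow, h2]
    have e2 : (‖z - (↑q : ℂ)‖ * (q + δ)) ^ 2 = ((δ - q) ^ 2 + z.im ^ 2) * (q + δ) ^ 2 := by
      rw [mul_pow, h1]
    rw [e1, e2]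
    nlinarith [sq_nonneg z.im, mul_nonneg (mul_nonneg hq.le hδ.le) (sq_nonneg z.im)]
  have := Real.sqrt_le_sqrt hsq
  rwa [Real.sqrt_sq (mul_nonneg (by linarith) (norm_nonneg _)),
    Real.sqrt_sq (mul_nonneg (norm_nonneg _) (by linarith))] at this

open Complex in
/-- Fragility bound with an RHP zero: if `T = T_mp · ((s−q)/(s+q))e^{−τs}` on the right
half-plane, with `T_mp` bounded holomorphic, and `T(p) = 1` at a real `p > 0`, `p ≠ q`,
then `‖T‖_∞ ≥ ((p+q)/|p−q|)·e^{τp}`. -/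
theorem hinf_lower_bound_rhp_zero (T Tmp : ℂ → ℂ) (p q τ : ℝ)
    (hp : 0 < p) (hq : 0 < q) (hpq : p ≠ q) (hτ : 0 ≤ τ)
    (hTd : DifferentiableOn ℂ T {s : ℂ | 0 < s.re})
    (hTb : ∃ C : ℝ, ∀ s : ℂ, 0 < s.re → ‖T s‖ ≤ C)
    (hmpd : DifferentiableOn ℂ Tmp {s : ℂ | 0 < s.re})
    (hmpb : ∃ C : ℝ, ∀ s : ℂ, 0 < s.re → ‖Tmp s‖ ≤ C)
    (hfac : ∀ s : ℂ, 0 < s.re →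
      T s = Tmp s * ((s - ↑q) / (s + ↑q)) * Complex.exp (-↑τ * s))
    (hTp : T ↑p = 1) :
    (p + q) / |p - q| * Real.exp (τ * p) ≤ ⨆ s : {s : ℂ // 0 < s.re}, ‖T (s : ℂ)‖ := by
  obtain ⟨C, hC⟩ := hTb
  obtain ⟨C', hC'⟩ := hmpb
  set M : ℝ := ⨆ s : {s : ℂ // 0 < s.re}, ‖T (s : ℂ)‖ with hM
  have hbdd : BddAbove (Set.range fun s : {s : ℂ // 0 < s.re} => ‖T (s : ℂ)‖) := by
    refine ⟨C, ?_⟩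
    rintro x ⟨s, rfl⟩
    exact hC s s.2
  have hMle : ∀ s : ℂ, 0 < s.re → ‖T s‖ ≤ M := fun s hs =>
    le_ciSup hbdd (⟨s, hs⟩ : {s : ℂ // 0 < s.re})
  have hppos : (0:ℂ).re < (↑p : ℂ).re := by simp [hp]
  -- key: ‖Tmp p‖ ≤ M
  have hkey : ‖Tmp ↑p‖ ≤ M := by
    -- for each small δ, c δ * ‖Tmp p‖ ≤ M
    set c : ℝ → ℝ := fun δ => (q - δ) / (q + δ) * Real.exp (-τ * δ) with hc
    have hstep : ∀ δ : ℝ, 0 < δ → δ < q → δ < p → c δ * ‖Tmp ↑p‖ ≤ M := by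
      intro δ hδ hδq hδp
      have hcpos : 0 < c δ := by
        have hcd : c δ = (q - δ) / (q + δ) * Real.exp (-τ * δ) := rfl
        rw [hcd]
        exact mul_pos (div_pos (by linarith) (by linarith)) (Real.exp_pos _)
      -- bound on the line Re z = δ
      have hline : ∀ z : ℂ, z.re = δ → ‖Tmp z‖ ≤ M / c δ := by
        intro z hz
        have hzre : 0 < z.re := by rw [hz]; exact hδ
        have hT := hfac z hzre
        have hnorm : ‖T z‖ = ‖Tmp z‖ * ‖(z - ↑q) / (z + ↑q)‖ * ‖Complex.exp (-↑τ * z)‖ := by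
          rw [hT, norm_mul, norm_mul]
        have hexp : ‖Complex.exp (-↑τ * z)‖ = Real.exp (-τ * δ) := by
          rw [Complex.norm_exp]
          congr 1
          simp [hz]
        have hap := allpass_lower q δ hq hδ hδq z hz
        have : ‖Tmp z‖ * c δ ≤ ‖T z‖ := by
          rw [hnorm, hc]
          calc ‖Tmp z‖ * ((q - δ) / (q + δ) * Real.exp (-τ * δ))
              ≤ ‖Tmp z‖ * (‖(z - ↑q) / (z + ↑q)‖ * Real.exp (-τ * δ)) := by
                apply mul_le_mul_of_nonneg_left _ (norm_nonneg _)
                exact mul_le_mul_of_nonneg_right hap (Real.exp_nonneg _)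
            _ = ‖Tmp z‖ * ‖(z - ↑q) / (z + ↑q)‖ * ‖Complex.exp (-↑τ * z)‖ := by
                rw [hexp]; ring
        have hTM := hMle z hzre
        rw [le_div_iff₀ hcpos]
        linarith
      -- Phragmén–Lindelöf for g z = Tmp (z + δ)
      set g : ℂ → ℂ := fun z => Tmp (z + ↑δ) with hg
      have hgd : DiffContOnCl ℂ g {z : ℂ | 0 < z.re} := by
        have hdo : DifferentiableOn ℂ g {z : ℂ | -δ < z.re} := by
          refine DifferentiableOn.comp (t := {s : ℂ | 0 < s.re}) hmpd
            ((differentiable_id.add_const _).differentiableOn) ?_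
          intro w hw
          simp only [Set.mem_setOf_eq] at hw ⊢
          simp only [Complex.add_re, Complex.ofReal_re]
          linarith
        have hopen : IsOpen {z : ℂ | -δ < z.re} := isOpen_lt continuous_const Complex.continuous_re
        have hsub : closure {z : ℂ | 0 < z.re} ⊆ {z : ℂ | -δ < z.re} := by
          have : closure {z : ℂ | 0 < z.re} ⊆ {z : ℂ | 0 ≤ z.re} := by
            apply closure_minimal
            · intro z hz
              simp only [Set.mem_setOf_eq] at hz ⊢
              exact le_of_lt hz
            · exact isClosed_le continuous_const Complex.continuous_re
          intro z hz
          have := this hz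
          simp only [Set.mem_setOf_eq] at this ⊢; linarith
        exact ⟨hdo.mono (fun z hz => hsub (subset_closure hz)),
          (hdo.continuousOn.mono hsub)⟩
      have hgb : ∀ z : ℂ, 0 < z.re → ‖g z‖ ≤ C' := by
        intro z hz
        apply hC'
        simp only [Complex.add_re, Complex.ofReal_re]; linarith
      have hPL : ∀ z : ℂ, 0 ≤ z.re → ‖g z‖ ≤ M / c δ := by
        intro z hz
        refine PhragmenLindelof.right_half_plane_of_bounded_on_real hgd ?_ ?_ ?_ hz
        · refine ⟨1, one_lt_two, 0, ?_⟩
          rw [Asymptotics.isBigO_iff]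
          refine ⟨C', ?_⟩
          filter_upwards [mem_inf_of_right (mem_principal_self _)] with w hw
          simpa using hgb w hw
        · refine Filter.isBoundedUnder_of_eventually_le (a := C') ?_
          filter_upwards [Filter.eventually_ge_atTop (1:ℝ)] with x hx
          apply hgb
          simp only [Complex.ofReal_re]; linarith
        · intro x
          apply hline
          simp
      have := hPL ((p : ℂ) - ↑δ) (by simp [Complex.sub_re]; linarith)
      have hgp : g ((p : ℂ) - ↑δ) = Tmp ↑p := by simp [hg]
      rw [hgp] at this
      rw [← le_div_iff₀' hcpos]
      linarith [this]
    -- limit δ → 0⁺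
    have hcont : Tendsto (fun δ : ℝ => c δ * ‖Tmp ↑p‖) (nhdsWithin 0 (Set.Ioi 0))
        (nhds (1 * ‖Tmp ↑p‖)) := by
      apply Tendsto.mono_left _ nhdsWithin_le_nhds
      have : Tendsto c (nhds 0) (nhds 1) := by
        have h1 : ContinuousAt (fun δ : ℝ => (q - δ) / (q + δ)) 0 :=
          ContinuousAt.div (by fun_prop) (by fun_prop) (by simpa using hq.ne')
        have h1' := h1.tendsto
        simp only [sub_zero, add_zero, div_self hq.ne'] at h1'
        have h2 : Tendsto (fun δ : ℝ => Real.exp (-τ * δ)) (nhds 0) (nhds 1) := by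
          have h2' : ContinuousAt (fun δ : ℝ => Real.exp (-τ * δ)) 0 := by fun_prop
          have h2'' := h2'.tendsto
          simp only [mul_zero, Real.exp_zero] at h2''
          exact h2''
        have h12 := h1'.mul h2
        rw [one_mul] at h12
        exact h12
      exact this.mul tendsto_const_nhds
    rw [one_mul] at hcont
    refine le_of_tendsto hcont ?_
    filter_upwards [Ioo_mem_nhdsGT_of_mem (Set.left_mem_Ico.mpr (by positivity :
      (0:ℝ) < min q p))] with δ hδ
    exact hstep δ hδ.1 (lt_of_lt_of_le hδ.2 (min_le_left _ _))
      (lt_of_lt_of_le hδ.2 (min_le_right _ _))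
  -- compute ‖Tmp p‖ from T p = 1
  have hfp := hfac ↑p (by simp [hp])
  rw [hTp] at hfp
  have hnorm1 : (1:ℝ) = ‖Tmp ↑p‖ * (|p - q| / (p + q)) * Real.exp (-(τ * p)) := by
    have := congrArg norm hfp
    rw [norm_one, norm_mul, norm_mul] at this
    rw [this]
    congr 2
    · rw [norm_div]
      have e1 : (↑p : ℂ) - ↑q = ((p - q : ℝ) : ℂ) := by push_cast; ring
      have e2 : (↑p : ℂ) + ↑q = ((p + q : ℝ) : ℂ) := by push_cast; ring
      rw [e1, e2, Complex.norm_real, Complex.norm_real, Real.norm_eq_abs, Real.norm_eq_abs,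
        abs_of_pos (show (0:ℝ) < p + q by linarith)]
    · have e3 : (-↑τ * ↑p : ℂ) = ((-(τ * p) : ℝ) : ℂ) := by push_cast; ring
      rw [e3, Complex.norm_exp, Complex.ofReal_re]
  have hpqabs : 0 < |p - q| := abs_pos.mpr (sub_ne_zero.mpr hpq)
  have hTmpval : ‖Tmp ↑p‖ = (p + q) / |p - q| * Real.exp (τ * p) := by
    have hexp : (0:ℝ) < Real.exp (-(τ * p)) := Real.exp_pos _
    field_simp at hnorm1 ⊢
    rw [Real.exp_neg] at hnorm1
    field_simp at hnorm1
    nlinarith [Real.exp_pos (τ * p), hnorm1]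
  rw [← hTmpval]
  exact hkey
end

section
/- Let T be a bounded holomorphic function on the right half-plane that factors as T = T_mp · e^{-τ s} with τ ≥ 0 and T_mp bounded holomorphic. If T(p) = 1 for some real p > 0, then ‖T‖_∞ ≥ e^{τ p}. -/
open Complex Metric MeasureTheory Filter Topology

private lemma re_moebius (p : ℝ) (z : ℂ) :
    ((p : ℂ) * (1 + z) / (1 - z)).re = p * (1 - Complex.normSq z) / Complex.normSq (1 - z) := by
  rw [Complex.div_re, ← add_div]
  congr 1
  simp [Complex.normSq_apply]
  ring

open Complex in
/-- Fragility bound without an RHP zero: if `T = T_mp · e^{−τs}` on the right half-plane,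
with `T_mp` bounded holomorphic, and `T(p) = 1` at a real `p > 0`, then `‖T‖_∞ ≥ e^{τp}`. -/
theorem hinf_lower_bound_delay (T Tmp : ℂ → ℂ) (p τ : ℝ) (hp : 0 < p) (hτ : 0 ≤ τ)
    (hTd : DifferentiableOn ℂ T {s : ℂ | 0 < s.re})
    (hTb : ∃ C : ℝ, ∀ s : ℂ, 0 < s.re → ‖T s‖ ≤ C)
    (hmpd : DifferentiableOn ℂ Tmp {s : ℂ | 0 < s.re})
    (hmpb : ∃ C : ℝ, ∀ s : ℂ, 0 < s.re → ‖Tmp s‖ ≤ C)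
    (hfac : ∀ s : ℂ, 0 < s.re → T s = Tmp s * Complex.exp (-↑τ * s))
    (hTp : T ↑p = 1) :
    Real.exp (τ * p) ≤ ⨆ s : {s : ℂ // 0 < s.re}, ‖T (s : ℂ)‖ := by
  classical
  set M : ℝ := ⨆ s : {s : ℂ // 0 < s.re}, ‖T (s : ℂ)‖ with hMdef
  obtain ⟨C₀, hC₀⟩ := hTb
  have hbdd : BddAbove (Set.range fun s : {s : ℂ // 0 < s.re} => ‖T (s : ℂ)‖) := by
    refine ⟨C₀, ?_⟩
    rintro x ⟨s, rfl⟩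
    exact hC₀ s s.2
  have hM : ∀ s : ℂ, 0 < s.re → ‖T s‖ ≤ M := fun s hs => le_ciSup hbdd ⟨s, hs⟩
  have hpre : (0:ℝ) < ((p:ℂ)).re := by simpa using hp
  have hM1 : (1:ℝ) ≤ M := by
    have := hM p hpre
    rw [hTp] at this
    simpa using this
  have hM0 : (0:ℝ) ≤ M := by linarith
  obtain ⟨C, hC⟩ := hmpb
  set K : ℝ := max C M with hKdef
  have hMK : M ≤ K := le_max_right _ _
  have hK0 : (0:ℝ) ≤ K := le_trans hM0 hMK
  set φ : ℂ → ℂ := fun z => (p:ℂ) * (1 + z) / (1 - z) with hφdef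
  have hre : ∀ z : ℂ, (φ z).re = p * (1 - Complex.normSq z) / Complex.normSq (1 - z) :=
    fun z => re_moebius p z
  have hφpos : ∀ z : ℂ, ‖z‖ < 1 → 0 < (φ z).re := by
    intro z hz
    rw [hre]
    have h1 : Complex.normSq z < 1 := by
      have : Complex.normSq z = ‖z‖ ^ 2 := by rw [← Complex.sq_norm]
      rw [this]
      nlinarith [norm_nonneg z]
    have hz1 : z ≠ 1 := by
      intro h; rw [h] at hz; simp at hz
    have h2 : 0 < Complex.normSq (1 - z) := by
      rw [Complex.normSq_pos, sub_ne_zero]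
      exact fun h => hz1 h.symm
    exact div_pos (mul_pos hp (by linarith)) h2
  -- Tmp in terms of T
  have hTmp_eq : ∀ s : ℂ, 0 < s.re → Tmp s = T s * Complex.exp ((τ:ℂ) * s) := by
    intro s hs
    rw [hfac s hs, mul_assoc, ← Complex.exp_add]
    norm_num
  have hTmp_bound : ∀ s : ℂ, 0 < s.re → ‖Tmp s‖ ≤ M * Real.exp (τ * s.re) := by
    intro s hs
    rw [hTmp_eq s hs, norm_mul]
    have h1 : ‖Complex.exp ((τ:ℂ) * s)‖ = Real.exp (τ * s.re) := by
      rw [Complex.norm_exp]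
      congr 1
      simp
    rw [h1]
    exact mul_le_mul_of_nonneg_right (hM s hs) (Real.exp_nonneg _)
  have hTmpp : ‖Tmp (p:ℂ)‖ = Real.exp (τ * p) := by
    have h := hTmp_eq p hpre
    rw [hTp, one_mul] at h
    rw [h, Complex.norm_exp]
    congr 1
    simp
  -- radii
  set r : ℕ → ℝ := fun n => 1 - 1 / (n + 2) with hrdef
  have hr0 : ∀ n, 0 < r n := by
    intro n
    have h1 : (1:ℝ) / (n + 2) ≤ 1 / 2 := by
      apply div_le_div_of_nonneg_left <;> norm_num
    simp only [hrdef]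
    linarith
  have hr1 : ∀ n, r n < 1 := by
    intro n
    have : (0:ℝ) < 1 / (n + 2) := by positivity
    simp only [hrdef]
    linarith
  have hrlim : Tendsto r atTop (𝓝 1) := by
    have h2 : Tendsto (fun n : ℕ => ((n:ℝ) + 2)) atTop atTop :=
      Filter.tendsto_atTop_add_const_right atTop 2 tendsto_natCast_atTop_atTop
    have h1 : Tendsto (fun n : ℕ => 1 / ((n:ℝ) + 2)) atTop (𝓝 0) := by
      simpa [one_div, Function.comp_def] using tendsto_inv_atTop_zero.comp h2
    have h3 : Tendsto (fun n : ℕ => 1 - 1 / ((n:ℝ) + 2)) atTop (𝓝 (1 - 0)) :=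
      (tendsto_const_nhds : Tendsto (fun _ : ℕ => (1:ℝ)) atTop (𝓝 1)).sub h1
    rw [sub_zero] at h3
    exact h3
  set F : ℕ → ℝ → ℝ := fun n θ => min K (M * Real.exp (τ * (φ (circleMap 0 (r n) θ)).re))
    with hFdef
  have hcm_norm : ∀ n θ, ‖circleMap 0 (r n) θ‖ = r n := by
    intro n θ
    rw [norm_circleMap_zero, abs_of_pos (hr0 n)]
  have hFcont : ∀ n, Continuous (F n) := by
    intro n
    have hden : ∀ θ : ℝ, (1:ℂ) - circleMap 0 (r n) θ ≠ 0 := by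
      intro θ h
      rw [sub_eq_zero] at h
      have := hcm_norm n θ
      rw [← h] at this
      simp only [norm_one] at this
      have := hr1 n
      linarith
    have hφc : Continuous fun θ : ℝ => (φ (circleMap 0 (r n) θ)).re := by
      apply Complex.continuous_re.comp
      exact (continuous_const.mul (continuous_const.add (continuous_circleMap 0 (r n)))).div
        (continuous_const.sub (continuous_circleMap 0 (r n))) hden
    exact continuous_const.min (continuous_const.mul
      (Real.continuous_exp.comp (continuous_const.mul hφc)))
  have hπ : (0:ℝ) < Real.pi := Real.pi_pos
  -- key inequality
  have key : ∀ n, Real.exp (τ * p) ≤ (2 * Real.pi)⁻¹ * ∫ θ in (0:ℝ)..2 * Real.pi, F n θ := by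
    intro n
    have hrn0 := hr0 n
    have hrn1 := hr1 n
    have hmem : ∀ z ∈ closedBall (0:ℂ) (r n), ‖z‖ < 1 := by
      intro z hz
      rw [mem_closedBall, dist_zero_right] at hz
      linarith
    have hφdiff : DifferentiableOn ℂ φ (closedBall 0 (r n)) := by
      intro z hz
      have h1 : (1:ℂ) - z ≠ 0 := by
        intro h
        rw [sub_eq_zero] at h
        have := hmem z hz
        rw [← h] at this
        simp at this
      exact (((differentiableAt_const _).mul ((differentiableAt_const _).add
        differentiableAt_id)).div ((differentiableAt_const _).sub differentiableAt_id)
        h1).differentiableWithinAt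
    have hgd : DifferentiableOn ℂ (fun z => Tmp (φ z)) (closedBall 0 (r n)) := by
      apply hmpd.comp hφdiff
      intro z hz
      exact hφpos z (hmem z hz)
    have h0mem : (0:ℂ) ∈ ball (0:ℂ) (r n) := by simp [hrn0]
    have hcauchy := hgd.circleIntegral_sub_inv_smul h0mem
    rw [circleIntegral] at hcauchy
    simp only [deriv_circleMap, sub_zero, smul_eq_mul] at hcauchy
    have hne : ∀ θ : ℝ, circleMap 0 (r n) θ ≠ 0 := by
      intro θ h
      have := hcm_norm n θ
      rw [h] at this
      simp at this
      linarith
    have hφ0 : φ 0 = (p:ℂ) := by simp [hφdef]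
    rw [hφ0] at hcauchy
    have hint : (∫ θ in (0:ℝ)..2 * Real.pi,
        circleMap 0 (r n) θ * I * ((circleMap 0 (r n) θ)⁻¹ * Tmp (φ (circleMap 0 (r n) θ))))
        = ∫ θ in (0:ℝ)..2 * Real.pi, I * Tmp (φ (circleMap 0 (r n) θ)) := by
      apply intervalIntegral.integral_congr
      intro θ _
      show circleMap 0 (r n) θ * I * ((circleMap 0 (r n) θ)⁻¹ * Tmp (φ (circleMap 0 (r n) θ)))
        = I * Tmp (φ (circleMap 0 (r n) θ))
      rw [show circleMap 0 (r n) θ * I * ((circleMap 0 (r n) θ)⁻¹ * Tmp (φ (circleMap 0 (r n) θ)))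
        = (circleMap 0 (r n) θ * (circleMap 0 (r n) θ)⁻¹) * (I * Tmp (φ (circleMap 0 (r n) θ)))
        by ring, mul_inv_cancel₀ (hne θ), one_mul]
    rw [hint, intervalIntegral.integral_const_mul] at hcauchy
    have hIne : (I:ℂ) ≠ 0 := I_ne_zero
    have hval : (∫ θ in (0:ℝ)..2 * Real.pi, Tmp (φ (circleMap 0 (r n) θ)))
        = (2 * Real.pi : ℝ) * Tmp (p:ℂ) := by
      apply mul_left_cancel₀ hIne
      rw [hcauchy]
      push_cast
      ring
    have hnorm : ‖∫ θ in (0:ℝ)..2 * Real.pi, Tmp (φ (circleMap 0 (r n) θ))‖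
        = 2 * Real.pi * Real.exp (τ * p) := by
      rw [hval, norm_mul, hTmpp]
      congr 1
      rw [Complex.norm_real, Real.norm_eq_abs, abs_of_pos (by positivity)]
    have hle : ‖∫ θ in (0:ℝ)..2 * Real.pi, Tmp (φ (circleMap 0 (r n) θ))‖
        ≤ ∫ θ in (0:ℝ)..2 * Real.pi, F n θ := by
      have habs : |∫ θ in (0:ℝ)..2 * Real.pi, F n θ| = ∫ θ in (0:ℝ)..2 * Real.pi, F n θ := by
        apply _root_.abs_of_nonneg
        exact intervalIntegral.integral_nonneg (by positivity)
          (fun θ _ => le_min hK0 (by positivity))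
      rw [← habs]
      apply intervalIntegral.norm_integral_le_abs_of_norm_le
      · filter_upwards with θ
        have hz : ‖circleMap 0 (r n) θ‖ < 1 := by rw [hcm_norm]; exact hrn1
        have hpos := hφpos _ hz
        refine le_min ?_ ?_
        · exact le_trans (hC _ hpos) (le_max_left _ _)
        · exact hTmp_bound _ hpos
      · exact (hFcont n).intervalIntegrable _ _
    rw [hnorm] at hle
    have h2π : (0:ℝ) < 2 * Real.pi := by positivity
    calc Real.exp (τ * p) = (2 * Real.pi)⁻¹ * (2 * Real.pi * Real.exp (τ * p)) := by
          field_simp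
      _ ≤ (2 * Real.pi)⁻¹ * ∫ θ in (0:ℝ)..2 * Real.pi, F n θ := by
          apply mul_le_mul_of_nonneg_left hle
          positivity
  -- limit
  have hlim : Tendsto (fun n => (2 * Real.pi)⁻¹ * ∫ θ in (0:ℝ)..2 * Real.pi, F n θ)
      atTop (𝓝 M) := by
    have hDCT : Tendsto (fun n => ∫ θ in (0:ℝ)..2 * Real.pi, F n θ) atTop
        (𝓝 (∫ _ in (0:ℝ)..2 * Real.pi, M)) := by
      apply intervalIntegral.tendsto_integral_filter_of_dominated_convergence (fun _ => K)
      · filter_upwards with n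
        exact (hFcont n).aestronglyMeasurable
      · filter_upwards with n
        filter_upwards with θ hθ
        have h1 : 0 ≤ F n θ := by
          apply le_min hK0
          positivity
        have h2 : F n θ ≤ K := min_le_left _ _
        rw [Real.norm_eq_abs, _root_.abs_of_nonneg h1]
        exact h2
      · exact intervalIntegrable_const
      · have hae : ∀ᵐ θ : ℝ, θ ≠ 2 * Real.pi := by
          rw [ae_iff]
          have : {θ : ℝ | ¬θ ≠ 2 * Real.pi} = {2 * Real.pi} := by
            ext θ; simp
          rw [this]
          exact Real.volume_singleton
        filter_upwards [hae] with θ hθ2 hθ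
        -- θ ∈ Ι 0 (2π) = Ioc 0 2π, θ ≠ 2π
        rw [Set.uIoc_of_le (by positivity)] at hθ
        have hθ0 : 0 < θ := hθ.1
        have hθlt : θ < 2 * Real.pi := lt_of_le_of_ne hθ.2 hθ2
        set z₀ : ℂ := Complex.exp (θ * I) with hz₀
        have hz₀1 : z₀ ≠ 1 := by
          intro hcon
          rw [hz₀, Complex.exp_eq_one_iff] at hcon
          obtain ⟨k, hk⟩ := hcon
          have him : θ = k * (2 * Real.pi) := by
            have := congrArg Complex.im hk
            simpa using this
          have hk0 : (0:ℝ) < (k:ℝ) := by nlinarith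
          have hk1 : (k:ℝ) < 1 := by nlinarith
          have hk0' : (0:ℤ) < k := by exact_mod_cast hk0
          have hk1' : (k:ℤ) < 1 := by exact_mod_cast hk1
          omega
        have hden : (1:ℂ) - z₀ ≠ 0 := by
          rw [sub_ne_zero]; exact fun h => hz₀1 h.symm
        have hcm : ∀ n, circleMap 0 (r n) θ = (r n : ℂ) * z₀ := by
          intro n; simp [circleMap, hz₀]
        have htend1 : Tendsto (fun n => circleMap 0 (r n) θ) atTop (𝓝 z₀) := by
          simp only [hcm]
          have : Tendsto (fun n => ((r n : ℝ) : ℂ)) atTop (𝓝 1) := by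
            exact (Complex.continuous_ofReal.tendsto 1).comp hrlim
          simpa using this.mul_const z₀
        have hφcont : ContinuousAt φ z₀ := by
          apply ContinuousAt.div
          · exact (continuous_const.mul (continuous_const.add continuous_id)).continuousAt
          · exact (continuous_const.sub continuous_id).continuousAt
          · exact hden
        have htend2 : Tendsto (fun n => (φ (circleMap 0 (r n) θ)).re) atTop
            (𝓝 ((φ z₀).re)) :=
          (Complex.continuous_re.tendsto (φ z₀)).comp (hφcont.tendsto.comp htend1)
        have hrez₀ : (φ z₀).re = 0 := by
          rw [hre]
          have : Complex.normSq z₀ = 1 := by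
            have h1 : ‖z₀‖ = 1 := by
              rw [hz₀, Complex.norm_exp]
              simp
            rw [← Complex.sq_norm, h1]
            norm_num
          rw [this]
          simp
        rw [hrez₀] at htend2
        have : Tendsto (fun n => F n θ) atTop (𝓝 (min K (M * Real.exp (τ * 0)))) := by
          apply Tendsto.min tendsto_const_nhds
          exact tendsto_const_nhds.mul (Real.continuous_exp.continuousAt.tendsto.comp
            (tendsto_const_nhds.mul htend2))
        simpa [min_eq_right hMK] using this
    rw [intervalIntegral.integral_const, smul_eq_mul, sub_zero] at hDCT
    have hmul := hDCT.const_mul ((2 * Real.pi)⁻¹)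
    have heq : (2 * Real.pi)⁻¹ * (2 * Real.pi * M) = M := by field_simp
    rw [heq] at hmul
    exact hmul
  exact ge_of_tendsto hlim (Filter.Eventually.of_forall key)
end
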